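/- Let p₁, …, pₙ be nonzero elements of the field K of Hahn series with value group ℝ and coefficients in ℂ (i.e. nonzero elements of HahnSeries ℝ ℂ). Suppose the real numbers v(p₁), …, v(pₙ) are linearly independent over ℚ, where v(p) denotes the order of p, i.e. the minimum of the support of p. Then p₁, …, pₙ are algebraically independent over ℂ, where ℂ is viewed as the subfield of K consisting of constant series. -/

import Mathlib

open HahnSeries MvPolynomial

private lemma hahn_order_prod {ι : Type*} (s : Finset ι) (f : ι → HahnSeries ℝ ℂ)
    (hf : ∀ i ∈ s, f i ≠ 0) :
    (∏ i ∈ s, f i).order = ∑ i ∈ s, (f i).order := by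
  induction s using Finset.cons_induction with
  | empty => simp [HahnSeries.order_one]
  | cons a s ha ih =>
    rw [Finset.prod_cons, Finset.sum_cons,
      HahnSeries.order_mul (hf a (Finset.mem_cons_self a s))
        (Finset.prod_ne_zero_iff.mpr fun i hi => hf i (Finset.mem_cons_of_mem hi)),
      ih (fun i hi => hf i (Finset.mem_cons_of_mem hi))]

private lemma hahn_sum_coeff {ι : Type*} (s : Finset ι) (f : ι → HahnSeries ℝ ℂ) (g : ℝ) :
    (∑ i ∈ s, f i).coeff g = ∑ i ∈ s, (f i).coeff g := by
  induction s using Finset.cons_induction with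
  | empty => simp
  | cons a s ha ih => simp [Finset.sum_cons, HahnSeries.coeff_add, ih]

/-- A vector of nonzero Hahn series (value group `ℝ`, coefficients `ℂ`) whose
orders (valuations) are `ℚ`-linearly independent real numbers has entries that
are algebraically independent over `ℂ` (embedded as constant series). -/
theorem hahn_generic_valuation_algebraicIndependent {n : ℕ}
    (p : Fin n → HahnSeries ℝ ℂ) (hp : ∀ i, p i ≠ 0)
    (hval : LinearIndependent ℚ (fun i => (p i).order)) :
    AlgebraicIndependent ℂ p := by
  classical
  rw [algebraicIndependent_iff]
  intro P hP
  by_contra hPne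
  set v : Fin n → ℝ := fun i => (p i).order with hv
  set φ : (Fin n →₀ ℕ) → ℝ := fun d => ∑ i, (d i : ℝ) * v i with hφ
  have hinj : ∀ d e : Fin n →₀ ℕ, φ d = φ e → d = e := by
    intro d e h
    have key := Fintype.linearIndependent_iff.mp hval
      (fun i => (d i : ℚ) - (e i : ℚ)) ?_
    · ext i
      have h1 := key i
      have h2 : (d i : ℚ) = (e i : ℚ) := by linarith
      exact_mod_cast h2
    · have hdiff : ∑ i, ((d i : ℚ) - (e i : ℚ)) • v i = φ d - φ e := by
        rw [hφ, ← Finset.sum_sub_distrib]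
        refine Finset.sum_congr rfl fun i _ => ?_
        push_cast [Rat.smul_def]
        ring
      rw [hdiff, h, sub_self]
  have halg : ∀ c : ℂ, algebraMap ℂ (HahnSeries ℝ ℂ) c = HahnSeries.C c := fun c => by
    rw [HahnSeries.algebraMap_apply', PowerSeries.algebraMap_apply]
    simp [HahnSeries.ofPowerSeries_C]
  set T : (Fin n →₀ ℕ) → HahnSeries ℝ ℂ :=
    fun d => (algebraMap ℂ (HahnSeries ℝ ℂ)) (P.coeff d) * ∏ i, p i ^ d i with hT
  have hTne : ∀ d ∈ P.support, T d ≠ 0 := by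
    intro d hd
    refine mul_ne_zero ?_ (Finset.prod_ne_zero_iff.mpr fun i _ => pow_ne_zero _ (hp i))
    rw [halg]
    exact HahnSeries.C_ne_zero (MvPolynomial.mem_support_iff.mp hd)
  have hTorder : ∀ d ∈ P.support, (T d).order = φ d := by
    intro d hd
    rw [hT]
    rw [HahnSeries.order_mul (by
        rw [halg]
        exact HahnSeries.C_ne_zero (MvPolynomial.mem_support_iff.mp hd))
      (Finset.prod_ne_zero_iff.mpr fun i _ => pow_ne_zero _ (hp i)),
      halg, HahnSeries.order_C, zero_add,
      hahn_order_prod _ _ (fun i _ => pow_ne_zero _ (hp i))]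
    simp [hφ, hv, nsmul_eq_mul]
  have hsupp : P.support.Nonempty :=
    Finset.nonempty_iff_ne_empty.mpr (fun h => hPne (MvPolynomial.support_eq_empty.mp h))
  obtain ⟨m, hm, hmin⟩ := P.support.exists_min_image φ hsupp
  have heval : MvPolynomial.aeval p P = ∑ d ∈ P.support, T d := by
    rw [MvPolynomial.aeval_def, MvPolynomial.eval₂_eq']
  have hcoeff : (∑ d ∈ P.support, T d).coeff (φ m) = (T m).coeff (φ m) := by
    rw [hahn_sum_coeff]
    refine Finset.sum_eq_single m (fun d hd hdm => ?_) (fun h => absurd hm h)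
    apply HahnSeries.coeff_eq_zero_of_lt_order
    rw [hTorder d hd]
    exact lt_of_le_of_ne (hmin d hd) (fun h => hdm (hinj d m h.symm))
  have : (T m).coeff (φ m) ≠ 0 := by
    rw [← hTorder m hm]
    exact fun h => hTne m hm (HahnSeries.coeff_order_eq_zero.mp h)
  rw [heval] at hP
  rw [hP] at hcoeff
  simp at hcoeff
  exact this hcoeff.symm
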